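/- Let γ : ℝ/(Lℤ) → ℝ³ be a C³ closed curve with Frenet frame (t, n, b) and nonvanishing curvature, and let w be a unit vector with w ≠ ±b(s₀). If the orthogonal projection of γ onto the plane w⊥ has an inflection point or cusp at s₀ — meaning the projected velocity and projected acceleration are linearly dependent at s₀ — then b(s₀) · w = 0. -/

import Mathlib

open Matrix

/-- If the planar projection of a curve has an inflection point or cusp at s₀,
then the binormal at s₀ is orthogonal to the projection direction. -/
theorem stmt_11 (γ t n b : ℝ → Fin 3 → ℝ) (κ : ℝ → ℝ) (w : Fin 3 → ℝ) (s₀ : ℝ)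
    (hγ : ContDiff ℝ 3 γ)
    (ht : ∀ s, t s = deriv γ s)
    (hunit_t : ∀ s, t s ⬝ᵥ t s = 1) (hunit_n : ∀ s, n s ⬝ᵥ n s = 1)
    (hκ : ∀ s, deriv t s = κ s • n s) (hκne : ∀ s, κ s ≠ 0)
    (hb : ∀ s, b s = t s ⨯₃ n s)
    (hw : w ⬝ᵥ w = 1) (hwb : w ≠ b s₀) (hwb' : w ≠ -b s₀)
    (hdep : ∃ a c : ℝ, (a, c) ≠ (0, 0) ∧
      a • (deriv γ s₀ - (deriv γ s₀ ⬝ᵥ w) • w) +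
        c • (deriv (deriv γ) s₀ - (deriv (deriv γ) s₀ ⬝ᵥ w) • w) = 0) :
    b s₀ ⬝ᵥ w = 0 := by
  obtain ⟨a, c, hne, heq⟩ := hdep
  have htf : t = deriv γ := funext ht
  -- t is differentiable
  have hdt : Differentiable ℝ t := by
    rw [htf]
    have h' : ContDiff ℝ (1 + 1) γ := hγ.of_le (by norm_num)
    exact (contDiff_succ_iff_deriv.mp h').2.2.differentiable (by norm_num)
  -- second derivative
  have hd2 : deriv (deriv γ) s₀ = κ s₀ • n s₀ := by rw [← htf]; exact hκ s₀
  -- t ⬝ n = 0 at every point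
  have hTN : ∀ s, t s ⬝ᵥ n s = 0 := by
    intro s
    have hT : HasDerivAt t (κ s • n s) s := by
      have := (hdt s).hasDerivAt
      rwa [hκ] at this
    have hTi : ∀ i, HasDerivAt (fun u => t u i) ((κ s • n s) i) s :=
      hasDerivAt_pi.mp hT
    have hg : HasDerivAt (fun u => t u ⬝ᵥ t u)
        (∑ i : Fin 3, ((κ s • n s) i * t s i + t s i * (κ s • n s) i)) s := by
      apply HasDerivAt.fun_sum
      intro i _
      exact (hTi i).mul (hTi i)
    have hg0 : (fun u => t u ⬝ᵥ t u) = fun _ => (1 : ℝ) := funext hunit_t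
    have hconst : HasDerivAt (fun u => t u ⬝ᵥ t u) 0 s := by
      rw [hg0]; exact hasDerivAt_const s 1
    have hsum : (∑ i : Fin 3, ((κ s • n s) i * t s i + t s i * (κ s • n s) i))
        = 2 * κ s * (t s ⬝ᵥ n s) := by
      simp [dotProduct, Fin.sum_univ_three, Pi.smul_apply, smul_eq_mul]
      ring
    have h0 : 2 * κ s * (t s ⬝ᵥ n s) = 0 := by rw [← hsum]; exact hg.unique hconst
    rcases mul_eq_zero.mp h0 with h | h
    · exact absurd (by linarith : κ s = 0) (hκne s)
    · exact h
  rw [← ht s₀, hd2] at heq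
  set T := t s₀ with hTd
  set N := n s₀ with hNd
  set B := b s₀ with hBd
  set k := κ s₀ with hkd
  have hBT : T ⬝ᵥ B = 0 := by rw [hBd, hb]; exact dot_self_cross _ _
  have hBN : N ⬝ᵥ B = 0 := by rw [hBd, hb]; exact dot_cross_self _ _
  have hTT : T ⬝ᵥ T = 1 := hunit_t s₀
  have hNN : N ⬝ᵥ N = 1 := hunit_n s₀
  have hTN0 : T ⬝ᵥ N = 0 := hTN s₀
  have hNT0 : N ⬝ᵥ T = 0 := by rw [dotProduct_comm]; exact hTN s₀
  have hk0 : k ≠ 0 := hκne s₀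
  -- dot the equation with an arbitrary vector v
  have hdot : ∀ v : Fin 3 → ℝ,
      a * (T ⬝ᵥ v) - a * ((T ⬝ᵥ w) * (w ⬝ᵥ v))
        + (c * (k * (N ⬝ᵥ v)) - c * (k * ((N ⬝ᵥ w) * (w ⬝ᵥ v)))) = 0 := by
    intro v
    have h := congrArg (fun x => x ⬝ᵥ v) heq
    simp only [add_dotProduct, sub_dotProduct, smul_dotProduct, smul_eq_mul,
      zero_dotProduct] at h
    linear_combination h
  have h1 := hdot T
  have h2 := hdot N
  have h3 := hdot B
  rw [dotProduct_comm w T, hTT, hNT0] at h1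
  rw [dotProduct_comm w N, hTN0, hNN] at h2
  rw [hBT, hBN] at h3
  have key : (a * (T ⬝ᵥ w) + c * (k * (N ⬝ᵥ w))) * (w ⬝ᵥ B) = 0 := by
    linear_combination -h3
  rcases mul_eq_zero.mp key with hl0 | hwB
  · exfalso
    have ha : a = 0 := by linear_combination h1 + (T ⬝ᵥ w) * hl0
    have hck : c * k = 0 := by linear_combination h2 + (N ⬝ᵥ w) * hl0
    have hc : c = 0 := by
      rcases mul_eq_zero.mp hck with h | h
      · exact h
      · exact absurd h hk0
    exact hne (by rw [ha, hc])
  · rw [dotProduct_comm]; exact hwB
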